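/- Conversely, let a : ℚ_p → ℝ be a nonnegative even probability density and suppose â(ξ) = 1 for some ξ ≠ 0. Then a(x) = 0 for almost every x with |x|_p > |ξ|_p^{−1}. -/

import Mathlib

open MeasureTheory
open scoped ENNReal

/-- The `p`-adic fractional part `{x}_p`. -/
noncomputable def pFract (p : ℕ) [Fact p.Prime] (x : ℚ_[p]) : ℚ :=
  Classical.epsilon fun r : ℚ =>
    0 ≤ r ∧ r < 1 ∧ (∃ m k : ℕ, r = (m : ℚ) / (p : ℚ) ^ k) ∧ ‖x - (r : ℚ_[p])‖ ≤ 1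

/-- The standard additive character `χ(x) = exp(2πi {x}_p)` of `ℚ_p`. -/
noncomputable def padicChar (p : ℕ) [Fact p.Prime] (x : ℚ_[p]) : ℂ :=
  Complex.exp (2 * Real.pi * Complex.I * ((pFract p x : ℚ) : ℂ))

lemma exists_pFract_witness (p : ℕ) [hp : Fact p.Prime] (x : ℚ_[p]) :
    ∃ r : ℚ, 0 ≤ r ∧ r < 1 ∧ (∃ m k : ℕ, r = (m : ℚ) / (p : ℚ) ^ k) ∧ ‖x - (r : ℚ_[p])‖ ≤ 1 := by
  have hp1 : (1 : ℝ) < p := by exact_mod_cast hp.out.one_lt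
  obtain ⟨n, hn⟩ := pow_unbounded_of_one_lt ‖x‖ hp1
  have hpn : ‖(p : ℚ_[p]) ^ n‖ = (p : ℝ) ^ (-(n : ℤ)) := Padic.norm_p_pow n
  have hppos : (0 : ℝ) < (p : ℝ) := by positivity
  have hy : ‖(p : ℚ_[p]) ^ n * x‖ ≤ 1 := by
    rw [norm_mul, hpn]
    calc (p : ℝ) ^ (-(n : ℤ)) * ‖x‖ ≤ (p : ℝ) ^ (-(n : ℤ)) * (p : ℝ) ^ n := by
          apply mul_le_mul_of_nonneg_left hn.le (by positivity)
      _ = 1 := by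
          rw [← zpow_natCast (p : ℝ) n, ← zpow_add₀ (ne_of_gt hppos)]
          simp
  set z : ℤ_[p] := ⟨(p : ℚ_[p]) ^ n * x, hy⟩ with hz
  set m : ℕ := z.appr n with hm
  have hspec : z - (m : ℤ_[p]) ∈ Ideal.span {(p : ℤ_[p]) ^ n} := PadicInt.appr_spec n z
  have hnorm : ‖z - (m : ℤ_[p])‖ ≤ (p : ℝ) ^ (-(n : ℤ)) :=
    (PadicInt.norm_le_pow_iff_mem_span_pow _ n).mpr hspec
  have hlt : m < p ^ n := PadicInt.appr_lt z n
  have hpq : (0 : ℚ) < (p : ℚ) ^ n := by exact_mod_cast pow_pos hp.out.pos n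
  refine ⟨(m : ℚ) / (p : ℚ) ^ n, by positivity, ?_, ⟨m, n, rfl⟩, ?_⟩
  · rw [div_lt_one hpq]
    exact_mod_cast hlt
  · have hcast : (((m : ℚ) / (p : ℚ) ^ n : ℚ) : ℚ_[p]) = (m : ℚ_[p]) / (p : ℚ_[p]) ^ n := by
      push_cast; ring
    have hpn0 : (p : ℚ_[p]) ^ n ≠ 0 := by
      apply pow_ne_zero
      exact_mod_cast hp.out.ne_zero
    have hxr : x - (((m : ℚ) / (p : ℚ) ^ n : ℚ) : ℚ_[p])
        = ((p : ℚ_[p]) ^ n * x - (m : ℚ_[p])) / (p : ℚ_[p]) ^ n := by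
      rw [hcast]; field_simp
    rw [hxr, norm_div, hpn]
    have hnorm' : ‖(p : ℚ_[p]) ^ n * x - (m : ℚ_[p])‖ ≤ (p : ℝ) ^ (-(n : ℤ)) := by
      have : ((z - (m : ℤ_[p]) : ℤ_[p]) : ℚ_[p]) = (p : ℚ_[p]) ^ n * x - (m : ℚ_[p]) := by
        rw [PadicInt.coe_sub, PadicInt.coe_natCast]
      rw [← this]
      exact_mod_cast hnorm
    rw [div_le_one (zpow_pos hppos _)]
    exact hnorm'

lemma pFract_spec (p : ℕ) [Fact p.Prime] (x : ℚ_[p]) :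
    0 ≤ pFract p x ∧ pFract p x < 1 ∧
      (∃ m k : ℕ, pFract p x = (m : ℚ) / (p : ℚ) ^ k) ∧ ‖x - (pFract p x : ℚ_[p])‖ ≤ 1 :=
  Classical.epsilon_spec (exists_pFract_witness p x)

lemma padicChar_re (p : ℕ) [Fact p.Prime] (x : ℚ_[p]) :
    (padicChar p x).re = Real.cos (2 * Real.pi * (pFract p x : ℝ)) := by
  rw [padicChar, show (2 * (Real.pi : ℂ) * Complex.I * ((pFract p x : ℚ) : ℂ))
      = ((2 * Real.pi * ((pFract p x : ℚ) : ℝ) : ℝ) : ℂ) * Complex.I by push_cast; ring,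
    Complex.exp_ofReal_mul_I_re]

lemma padicChar_re_le_one (p : ℕ) [Fact p.Prime] (x : ℚ_[p]) : (padicChar p x).re ≤ 1 := by
  rw [padicChar_re]; exact Real.cos_le_one _

lemma padicChar_re_lt_one (p : ℕ) [Fact p.Prime] (x : ℚ_[p]) (hx : 1 < ‖x‖) :
    (padicChar p x).re < 1 := by
  obtain ⟨h0, h1, -, h4⟩ := pFract_spec p x
  have hr0 : pFract p x ≠ 0 := by
    rintro h
    have h5 : ‖x‖ ≤ 1 := by simpa [h] using h4
    exact absurd h5 (not_le.mpr hx)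
  have hr0' : 0 < pFract p x := lt_of_le_of_ne h0 (Ne.symm hr0)
  rw [padicChar_re]
  rcases lt_or_eq_of_le (Real.cos_le_one (2 * Real.pi * (pFract p x : ℝ))) with h | h
  · exact h
  · exfalso
    obtain ⟨n, hn⟩ := (Real.cos_eq_one_iff _).mp h
    have hpi : (0 : ℝ) < 2 * Real.pi := by positivity
    have hrpos : (0 : ℝ) < (pFract p x : ℝ) := by exact_mod_cast hr0'
    have hrlt : ((pFract p x : ℝ)) < 1 := by exact_mod_cast h1
    have hneq : (n : ℝ) = (pFract p x : ℝ) := by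
      have h' : (n : ℝ) * (2 * Real.pi) = (pFract p x : ℝ) * (2 * Real.pi) := by
        linear_combination hn
      exact mul_right_cancel₀ (ne_of_gt hpi) h'
    have h0n : 0 < (n : ℝ) := by rw [hneq]; exact hrpos
    have h1n : (n : ℝ) < 1 := by rw [hneq]; exact hrlt
    have : 0 < n := by exact_mod_cast h0n
    have : (1 : ℤ) ≤ n := this
    have : (1 : ℝ) ≤ (n : ℝ) := by exact_mod_cast this
    linarith

/-- If `a` is a nonnegative even probability density on `ℚ_p` with `â(ξ) = 1`
for some `ξ ≠ 0`, then `a(x) = 0` for almost every `x` with `|x|_p > |ξ|_p⁻¹`. -/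
theorem padic_density_vanishes_of_fourier_eq_one (p : ℕ) [Fact p.Prime]
    [MeasurableSpace ℚ_[p]] [BorelSpace ℚ_[p]]
    (μ : Measure ℚ_[p]) [μ.IsAddHaarMeasure]
    (hμ : μ {x : ℚ_[p] | ‖x‖ ≤ 1} = 1)
    (a : ℚ_[p] → ℝ) (ha_nonneg : ∀ x, 0 ≤ a x) (ha_even : ∀ x, a (-x) = a x)
    (ha_int : Integrable a μ) (ha_one : ∫ x, a x ∂μ = 1)
    (ξ : ℚ_[p]) (hξ : ξ ≠ 0)
    (hhat : ∫ x, padicChar p (ξ * x) * (a x : ℂ) ∂μ = 1) :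
    ∀ᵐ x ∂(μ.restrict {x : ℚ_[p] | ‖ξ‖⁻¹ < ‖x‖}), a x = 0 := by
  set F : ℚ_[p] → ℂ := fun x => padicChar p (ξ * x) * (a x : ℂ) with hF
  have hFint : Integrable F μ := by
    by_contra h
    rw [integral_undef h] at hhat
    exact one_ne_zero hhat.symm
  set g : ℚ_[p] → ℝ := fun x => a x - (F x).re with hg
  have hFre : ∀ x, (F x).re = (padicChar p (ξ * x)).re * a x := by
    intro x
    simp [hF, Complex.mul_re]
  have hg_nonneg : ∀ x, 0 ≤ g x := by
    intro x
    show 0 ≤ a x - (F x).re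
    rw [hFre x]
    nlinarith [padicChar_re_le_one p (ξ * x), ha_nonneg x]
  have hg_int : Integrable g μ := ha_int.sub hFint.re
  have hg_zero : ∫ x, g x ∂μ = 0 := by
    have h1 : ∫ x, g x ∂μ = (∫ x, a x ∂μ) - ∫ x, (F x).re ∂μ := integral_sub ha_int hFint.re
    have h2 : ∫ x, (F x).re ∂μ = (∫ x, F x ∂μ).re := integral_re hFint
    rw [h1, h2, ha_one, hhat]
    simp
  have hae : g =ᵐ[μ] 0 :=
    (integral_eq_zero_iff_of_nonneg hg_nonneg hg_int).mp hg_zero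
  have hS : MeasurableSet {x : ℚ_[p] | ‖ξ‖⁻¹ < ‖x‖} :=
    measurableSet_lt measurable_const measurable_norm
  filter_upwards [ae_restrict_of_ae hae, ae_restrict_mem hS] with x hx hxS
  have hgx : a x - (F x).re = 0 := hx
  have hnx : 1 < ‖ξ * x‖ := by
    rw [norm_mul]
    have hξpos : 0 < ‖ξ‖ := norm_pos_iff.mpr hξ
    have := hxS
    change ‖ξ‖⁻¹ < ‖x‖ at this
    calc (1 : ℝ) = ‖ξ‖ * ‖ξ‖⁻¹ := by field_simp
      _ < ‖ξ‖ * ‖x‖ := by exact mul_lt_mul_of_pos_left this hξpos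
  have hlt : (padicChar p (ξ * x)).re < 1 := padicChar_re_lt_one p (ξ * x) hnx
  rw [hFre x] at hgx
  nlinarith [ha_nonneg x]
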